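/- Let p be a pmf on {L,...,R} with R < ∞ (L may be -∞) satisfying the backward analogues of (C1)-(C3). A random variable X supported on {L,...,R} with E|(Δ⁻p(X)/p(X))·X| < ∞ has pmf p if and only if its pmf ρ satisfies ρ(k) = E[(Δ⁻p(X)/p(X))·1{X ≤ k}] for all k ≤ R, where Δ⁻p(k) = p(k) - p(k-1). -/

import Mathlib

open Filter Finset Function Topology

private lemma summable_trunc {F : ℤ → ℝ} (hF : Summable F) (m : ℤ) :
    Summable (fun j : ℤ => F j * (if j ≤ m then (1:ℝ) else 0)) := by
  have h2 : (fun j : ℤ => F j * (if j ≤ m then (1:ℝ) else 0))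
      = Set.indicator (Set.Iic m) F := by
    funext j; by_cases h : j ≤ m <;> simp [Set.indicator_apply, Set.mem_Iic, h]
  rw [h2]; exact hF.indicator _

private lemma tsum_trunc_succ {F : ℤ → ℝ} (hF : Summable F) (m : ℤ) :
    ∑' j : ℤ, F j * (if j ≤ m then (1:ℝ) else 0)
      = (∑' j : ℤ, F j * (if j ≤ m - 1 then (1:ℝ) else 0)) + F m := by
  have key : ∀ j : ℤ, F j * (if j ≤ m then (1:ℝ) else 0)
      = F j * (if j ≤ m - 1 then (1:ℝ) else 0) + (if j = m then F m else 0) := by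
    intro j
    rcases lt_trichotomy j m with h | h | h
    · simp [h.le, show j ≤ m - 1 by omega, show j ≠ m by omega]
    · subst h; simp [show ¬ (j ≤ j - 1) by omega]
    · simp [show ¬ j ≤ m by omega, show ¬ j ≤ m - 1 by omega, show j ≠ m by omega]
  have hsingle : Summable (fun j : ℤ => if j = m then F m else 0) :=
    summable_of_ne_finset_zero (s := {m}) (by intro j hj; simp at hj; simp [hj])
  rw [tsum_congr key, Summable.tsum_add (summable_trunc hF (m-1)) hsingle, tsum_ite_eq]

private lemma tsum_telescope {p : ℤ → ℝ} (hp : Summable p) (k : ℤ) :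
    ∑' j : ℤ, (p j - p (j - 1)) * (if j ≤ k then (1:ℝ) else 0) = p k := by
  set f : ℤ → ℝ := fun j => (p j - p (j - 1)) * (if j ≤ k then (1:ℝ) else 0) with hf
  have hp' : Summable fun j : ℤ => p (j - 1) := by
    exact (Equiv.subRight (1:ℤ)).summable_iff.2 hp
  have hfs : Summable f := by
    apply Summable.of_abs
    apply Summable.of_nonneg_of_le (fun j => abs_nonneg _) _ ((hp.abs).add (hp'.abs))
    intro j
    by_cases h : j ≤ k
    · simpa [hf, h] using abs_sub (p j) (p (j-1))
    · simp [hf, h]; positivity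
  have he : Function.Injective (fun n : ℕ => k - (n:ℤ)) := by
    intro a b h; simp only [] at h; omega
  have hrange : Function.support f ⊆ Set.range (fun n : ℕ => k - (n:ℤ)) := by
    intro j hj
    by_contra hc
    apply hj
    have hjk : ¬ j ≤ k := by
      intro h
      exact hc ⟨(k - j).toNat, by simp; omega⟩
    simp [hf, hjk]
  have h1 : ∑' n : ℕ, f (k - (n:ℤ)) = ∑' j : ℤ, f j := he.tsum_eq hrange
  set a : ℕ → ℝ := fun n => p (k - (n:ℤ)) with ha
  have h2 : ∀ n : ℕ, f (k - (n:ℤ)) = a n - a (n+1) := by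
    intro n
    have h3 : ((k - (n:ℤ))) ≤ k := by omega
    have harg : k - (n:ℤ) - 1 = k - ((n+1:ℕ):ℤ) := by push_cast; ring
    simp [hf, h3, ha, harg]
  have hs : Summable (fun n : ℕ => a n - a (n+1)) :=
    (hfs.comp_injective he).congr h2
  have hlim : Tendsto a atTop (𝓝 0) := by
    have hc : Tendsto (fun n : ℕ => k - (n:ℤ)) cofinite cofinite := he.tendsto_cofinite
    have h4 := hp.tendsto_cofinite_zero.comp hc
    rwa [Nat.cofinite_eq_atTop] at h4
  have hpartial : Tendsto (fun n => ∑ i ∈ range n, (a i - a (i+1))) atTop (𝓝 (a 0)) := by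
    have h5 : ∀ n, ∑ i ∈ range n, (a i - a (i+1)) = a 0 - a n :=
      fun n => Finset.sum_range_sub' a n
    simp only [h5]
    simpa using tendsto_const_nhds.sub hlim
  have h6 : HasSum (fun n : ℕ => a n - a (n+1)) (a 0) :=
    (hs.hasSum_iff_tendsto_nat).2 hpartial
  calc ∑' j : ℤ, f j = ∑' n : ℕ, f (k - (n:ℤ)) := h1.symm
    _ = ∑' n : ℕ, (a n - a (n+1)) := tsum_congr h2
    _ = a 0 := h6.tsum_eq
    _ = p k := by simp [ha]



/-- Backward-difference Stein characterization (Corollary 3.3): for a pmf on `{L,...,R}` with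
`R < ∞`, the pmf ρ of a random variable supported there equals p iff
`ρ k = E[(Δ⁻p(X)/p(X))·1{X ≤ k}]` for all `k ≤ R`. -/
theorem stmt_2 (p ρ : ℤ → ℝ) (L : WithBot ℤ) (R : ℤ)
    (hsupp : ∀ k : ℤ, 0 < p k ↔ (L ≤ (k : WithBot ℤ) ∧ k ≤ R))
    (hnonneg : ∀ k, 0 ≤ p k)
    (hsum : ∑' k : ℤ, p k = 1)
    (hC2 : ∃ M : ℝ, ∀ k : ℤ, L ≤ ((k - 1 : ℤ) : WithBot ℤ) → k ≤ R →
      |(p k - p (k - 1)) * min (∑' ℓ : ℤ, if k ≤ ℓ then p ℓ else 0)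
        (1 - ∑' ℓ : ℤ, if k ≤ ℓ then p ℓ else 0) / (p k * p (k - 1))| ≤ M)
    (hC3 : Summable (fun k : ℤ => |(k : ℝ)| * p k))
    (hρnonneg : ∀ k, 0 ≤ ρ k)
    (hρsum : ∑' k : ℤ, ρ k = 1)
    (hρsupp : ∀ k : ℤ, ρ k ≠ 0 → (L ≤ (k : WithBot ℤ) ∧ k ≤ R))
    (hint : Summable (fun k : ℤ => |(p k - p (k - 1)) / p k * (k : ℝ)| * ρ k)) :
    ρ = p ↔ ∀ k : ℤ, k ≤ R →
      ρ k = ∑' j : ℤ, ((p j - p (j - 1)) / p j * (if j ≤ k then (1 : ℝ) else 0)) * ρ j := by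
  have hps : Summable p := by
    by_contra h
    rw [tsum_eq_zero_of_not_summable h] at hsum
    norm_num at hsum
  have hpzero : ∀ k : ℤ, ¬ (L ≤ (k : WithBot ℤ)) → p k = 0 := by
    intro k hk
    by_contra h
    exact hk ((hsupp k).1 (lt_of_le_of_ne (hnonneg k) (Ne.symm h))).1
  have hρzero : ∀ k : ℤ, ¬ (L ≤ (k : WithBot ℤ) ∧ k ≤ R) → ρ k = 0 := by
    intro k hk; by_contra h; exact hk (hρsupp k h)
  constructor
  · intro hEq
    intro k hk
    rw [hEq]
    rw [← tsum_telescope hps k]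
    apply tsum_congr
    intro j
    by_cases hj : j ≤ k
    · by_cases hpj : p j = 0
      · have hL : ¬ (L ≤ (j : WithBot ℤ)) := by
          intro hL
          have := (hsupp j).2 ⟨hL, le_trans hj hk⟩
          linarith
        have hL' : ¬ (L ≤ ((j - 1 : ℤ) : WithBot ℤ)) := by
          intro h
          exact hL (le_trans h (WithBot.coe_le_coe.2 (by omega)))
        have h1 : p (j - 1) = 0 := hpzero _ hL'
        simp [hpj, h1, hj]
      · rw [if_pos hj, mul_one, mul_one, div_mul_cancel₀ _ hpj]
    · simp [hj]
  · intro H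
    set g : ℤ → ℝ := fun j => (p j - p (j - 1)) / p j * ρ j with hg
    have hgs : Summable g := by
      have hh : Summable (fun k : ℤ => if k = 0 then 0 else g k) := by
        apply Summable.of_abs
        apply Summable.of_nonneg_of_le (fun k => abs_nonneg _) _ hint
        intro k
        by_cases hk : k = 0
        · subst hk; simp
        · have h1 : (1:ℝ) ≤ |(k:ℝ)| := by
            rw [← Int.cast_abs]; exact_mod_cast Int.one_le_abs hk
          have h2 : |g k| = |(p k - p (k - 1)) / p k| * ρ k := by
            rw [hg]; rw [abs_mul, abs_of_nonneg (hρnonneg k)]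
          rw [if_neg hk, h2, abs_mul]
          have h9 : |(p k - p (k - 1)) / p k| * ρ k * 1
              ≤ |(p k - p (k - 1)) / p k| * ρ k * |(k:ℝ)| :=
            mul_le_mul_of_nonneg_left h1 (mul_nonneg (abs_nonneg _) (hρnonneg k))
          nlinarith [h9]
      have hd : Summable (fun k : ℤ => if k = 0 then g 0 else 0) :=
        summable_of_ne_finset_zero (s := {0}) (by intro k hk; simp at hk; simp [hk])
      have heq : g = fun k => (if k = 0 then 0 else g k) + (if k = 0 then g 0 else 0) := by
        funext k; by_cases hk : k = 0 <;> simp [hk]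
      rw [heq]
      exact hh.add hd
    have H' : ∀ k : ℤ, k ≤ R → ρ k = ∑' j : ℤ, g j * (if j ≤ k then (1:ℝ) else 0) := by
      intro k hk
      rw [H k hk]
      exact tsum_congr fun j => by rw [hg]; ring
    have hstar : ∀ k : ℤ, k ≤ R → ρ (k - 1) * p k = ρ k * p (k - 1) := by
      intro k hk
      have h1 : ρ k = ρ (k - 1) + g k := by
        rw [H' k hk, H' (k - 1) (by omega), tsum_trunc_succ hgs k]
      by_cases hpk : p k = 0
      · have hLk : ¬ (L ≤ (k : WithBot ℤ)) := by
          intro hL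
          have := (hsupp k).2 ⟨hL, hk⟩
          linarith
        have hρk : ρ k = 0 := hρzero k (fun h => hLk h.1)
        have hgk : g k = 0 := by rw [hg]; simp [hρk]
        have hρk1 : ρ (k - 1) = 0 := by
          rw [h1, hgk, add_zero] at hρk; exact hρk
        rw [hρk1, hρk]; ring
      · have h2 : ρ (k - 1) = ρ k - g k := by linarith
        rw [h2, hg]
        field_simp
        ring
    have hex : ∃ k : ℤ, 0 < p k := by
      by_contra h
      push_neg at h
      have hz : ∀ k : ℤ, p k = 0 := fun k => le_antisymm (h k) (hnonneg k)
      rw [tsum_congr hz, tsum_zero] at hsum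
      norm_num at hsum
    obtain ⟨k0, hk0⟩ := hex
    obtain ⟨hLk0, hk0R⟩ := (hsupp k0).1 hk0
    have hLR : L ≤ (R : WithBot ℤ) := le_trans hLk0 (WithBot.coe_le_coe.2 hk0R)
    have hpR : 0 < p R := (hsupp R).2 ⟨hLR, le_refl R⟩
    set c : ℝ := ρ R / p R with hc
    have hind : ∀ n : ℕ, ρ (R - (n:ℤ)) = c * p (R - (n:ℤ)) := by
      intro n
      induction n with
      | zero =>
        have h0 : c * p R = ρ R := by
          rw [hc]; field_simp
        simpa using h0.symm
      | succ n ih =>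
        have hkR : R - (n:ℤ) ≤ R := by omega
        have hstep := hstar (R - (n:ℤ)) hkR
        rw [ih] at hstep
        have harg : R - ((n+1:ℕ):ℤ) = R - (n:ℤ) - 1 := by push_cast; ring
        rw [harg]
        by_cases hpk : p (R - (n:ℤ)) = 0
        · have hL1 : ¬ (L ≤ ((R - (n:ℤ)) : WithBot ℤ)) := by
            intro hL
            have := (hsupp (R - (n:ℤ))).2 ⟨hL, hkR⟩
            linarith
          have hL2 : ¬ (L ≤ ((R - (n:ℤ) - 1 : ℤ) : WithBot ℤ)) := by
            intro h
            exact hL1 (le_trans h (WithBot.coe_le_coe.2 (by omega)))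
          have hp1 : p (R - (n:ℤ) - 1) = 0 := hpzero _ hL2
          have hρ1 : ρ (R - (n:ℤ) - 1) = 0 := hρzero _ (fun h => hL2 h.1)
          rw [hρ1, hp1]; ring
        · have h3 : ρ (R - (n:ℤ) - 1) * p (R - (n:ℤ))
              = (c * p (R - (n:ℤ) - 1)) * p (R - (n:ℤ)) := by
            rw [hstep]; ring
          exact mul_right_cancel₀ hpk h3
    have hall : ∀ k : ℤ, ρ k = c * p k := by
      intro k
      by_cases hk : k ≤ R
      · have h4 := hind (R - k).toNat
        have h5 : R - ((R - k).toNat : ℤ) = k := by omega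
        rwa [h5] at h4
      · have h5 : ρ k = 0 := hρzero k (fun h => hk h.2)
        have h6 : p k = 0 := by
          by_contra h
          exact hk ((hsupp k).1 (lt_of_le_of_ne (hnonneg k) (Ne.symm h))).2
        rw [h5, h6]; ring
    have hc1 : c = 1 := by
      have h7 : ∑' k : ℤ, ρ k = c * ∑' k : ℤ, p k := by
        rw [← tsum_mul_left]
        exact tsum_congr hall
      rw [hρsum, hsum] at h7
      linarith
    funext k
    rw [hall k, hc1, one_mul]
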